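/- The consecutive patterns 110 and 100 are super-strongly Wilf equivalent: for all n and all subsets T of {1,...,n}, the number of inversion sequences of length n whose set of starting positions of occurrences of 110 equals T is the same as the number whose set of starting positions of occurrences of 100 equals T. -/

import Mathlib

def IsInvSeq {n : ℕ} (e : Fin n → Fin n) : Prop := ∀ i : Fin n, (e i : ℕ) ≤ (i : ℕ)

def extSeq {n : ℕ} (e : Fin n → Fin n) : ℕ → ℕ := fun i => if h : i < n then (e ⟨i, h⟩ : ℕ) else 0

/-- `e` has an occurrence of 110 in (0-indexed) position `i`: `e_i = e_{i+1} > e_{i+2}`. -/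
def Occ110At {n : ℕ} (e : Fin n → Fin n) (i : ℕ) : Prop :=
  i + 2 < n ∧ extSeq e i = extSeq e (i + 1) ∧ extSeq e (i + 2) < extSeq e (i + 1)

/-- `e` has an occurrence of 100 in (0-indexed) position `i`: `e_i > e_{i+1} = e_{i+2}`. -/
def Occ100At {n : ℕ} (e : Fin n → Fin n) (i : ℕ) : Prop :=
  i + 2 < n ∧ extSeq e (i + 1) < extSeq e i ∧ extSeq e (i + 1) = extSeq e (i + 2)

namespace WilfAux

open Finset
open scoped Classical

variable {n : ℕ}

lemma extSeq_eq (e : Fin n → Fin n) {p : ℕ} (h : p < n) : extSeq e p = (e ⟨p, h⟩ : ℕ) :=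
  dif_pos h

lemma extSeq_val (e : Fin n → Fin n) (a : Fin n) : extSeq e (a : ℕ) = (e a : ℕ) := by
  rw [extSeq_eq e a.isLt]

lemma fin_eq_of_extSeq {e : Fin n → Fin n} {a b : Fin n}
    (h : extSeq e (a : ℕ) = extSeq e (b : ℕ)) : e a = e b := by
  apply Fin.ext
  rwa [extSeq_val, extSeq_val] at h

/-- The set of positions where the shift happens (depends only on `T`). -/
def InS (T : Finset ℕ) (p : ℕ) : Prop :=
  (∃ j ∈ T, p = j + 1) ∨ (p ∈ T ∧ ∃ j ∈ T, p = j + 2)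

/-- Left shift on the region determined by `T`. -/
noncomputable def shiftL (T : Finset ℕ) (e : Fin n → Fin n) : Fin n → Fin n := fun p =>
  if InS T (p : ℕ) then (if h : (p : ℕ) + 1 < n then e ⟨(p : ℕ) + 1, h⟩ else e p) else e p

/-- Right shift on the region determined by `T`. -/
noncomputable def shiftR (T : Finset ℕ) (f : Fin n → Fin n) : Fin n → Fin n := fun p =>
  if InS T (p : ℕ) then f ⟨(p : ℕ) - 1, Nat.lt_of_le_of_lt (Nat.sub_le _ _) p.isLt⟩ else f p

section Side110

variable {T : Finset ℕ} {e : Fin n → Fin n}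

lemma adj110 (hocc : ∀ j ∈ T, Occ110At e j) {j : ℕ} (hj : j ∈ T) : j + 1 ∉ T := by
  intro hj1
  obtain ⟨h2, heq, hlt⟩ := hocc j hj
  obtain ⟨h2', heq', hlt'⟩ := hocc (j + 1) hj1
  have h3 : extSeq e (j + 1 + 1) = extSeq e (j + 2) := by norm_num
  omega

lemma InS_bound110 (hocc : ∀ j ∈ T, Occ110At e j) {p : ℕ} (hp : InS T p) :
    1 ≤ p ∧ p + 1 < n := by
  rcases hp with ⟨j, hj, hpj⟩ | ⟨hpT, j, hj, hpj⟩
  · have := (hocc j hj).1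
    omega
  · have := (hocc p hpT).1
    omega

lemma extSeq_shiftL (hocc : ∀ j ∈ T, Occ110At e j) (p : ℕ) :
    extSeq (shiftL T e) p = if InS T p then extSeq e (p + 1) else extSeq e p := by
  by_cases hp : InS T p
  · have hb := InS_bound110 hocc hp
    have hpn : p < n := by omega
    have hpn1 : p + 1 < n := hb.2
    rw [if_pos hp, extSeq_eq _ hpn, extSeq_eq e hpn1]
    show (shiftL T e ⟨p, hpn⟩ : ℕ) = _
    unfold shiftL
    simp only [if_pos hp, dif_pos hpn1]
  · rw [if_neg hp]
    by_cases hpn : p < n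
    · rw [extSeq_eq _ hpn, extSeq_eq e hpn]
      show (shiftL T e ⟨p, hpn⟩ : ℕ) = _
      unfold shiftL
      simp only [if_neg hp]
    · unfold extSeq
      rw [dif_neg hpn, dif_neg hpn]

lemma occ100_shiftL (hocc : ∀ j ∈ T, Occ110At e j) {i : ℕ} (hi : i ∈ T) :
    Occ100At (shiftL T e) i := by
  obtain ⟨h2, heq, hlt⟩ := hocc i hi
  have key := extSeq_shiftL hocc
  have Fi : extSeq (shiftL T e) i = extSeq e i := by
    rw [key i]
    by_cases h : InS T i
    · rw [if_pos h]
      rcases h with ⟨j, hj, hij⟩ | ⟨hiT, j, hj, hij⟩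
      · have : j + 1 ∈ T := hij ▸ hi
        exact absurd this (adj110 hocc hj)
      · exact heq.symm
    · rw [if_neg h]
  have Fi1 : extSeq (shiftL T e) (i + 1) = extSeq e (i + 2) := by
    rw [key (i + 1), if_pos (show InS T (i+1) from Or.inl ⟨i, hi, rfl⟩)]
  have Fi2 : extSeq (shiftL T e) (i + 2) = extSeq e (i + 2) := by
    rw [key (i + 2)]
    by_cases h : InS T (i + 2)
    · rw [if_pos h]
      rcases h with ⟨j, hj, hij⟩ | ⟨hiT, j, hj, hij⟩
      · have hji : j = i + 1 := by omega
        rw [hji] at hj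
        exact absurd hj (adj110 hocc hi)
      · obtain ⟨h2', heq', hlt'⟩ := hocc (i + 2) hiT
        exact heq'.symm
    · rw [if_neg h]
  refine ⟨h2, ?_, ?_⟩
  · rw [Fi, Fi1]; omega
  · rw [Fi1, Fi2]

lemma invseq_shiftL (hocc : ∀ j ∈ T, Occ110At e j) (he : IsInvSeq e) :
    IsInvSeq (shiftL T e) := by
  intro p
  unfold shiftL
  by_cases hp : InS T (p : ℕ)
  · have hb := InS_bound110 hocc hp
    rw [if_pos hp, dif_pos hb.2]
    have hval : ((e ⟨(p : ℕ) + 1, hb.2⟩ : Fin n) : ℕ) = extSeq e ((p : ℕ) + 1) :=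
      (extSeq_eq e hb.2).symm
    rcases hp with ⟨j, hj, hpj⟩ | ⟨hpT, j, hj, hpj⟩
    · obtain ⟨h2, heq, hlt⟩ := hocc j hj
      have h3 : extSeq e ((p : ℕ) + 1) = extSeq e (j + 2) := by rw [hpj]
      have h4 : extSeq e (j + 1) = (e ⟨j + 1, by omega⟩ : ℕ) := extSeq_eq e (by omega)
      have h5 : ((e ⟨j + 1, by omega⟩ : Fin n) : ℕ) ≤ j + 1 := he _
      omega
    · obtain ⟨h2, heq, hlt⟩ := hocc p hpT
      have h3 : extSeq e ((p : ℕ) + 1) = extSeq e (p : ℕ) := heq.symm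
      have h4 : extSeq e (p : ℕ) = (e ⟨(p : ℕ), by omega⟩ : ℕ) := extSeq_eq e (by omega)
      have h5 : ((e ⟨(p : ℕ), by omega⟩ : Fin n) : ℕ) ≤ (p : ℕ) := he _
      omega
  · rw [if_neg hp]
    exact he p

lemma shiftR_shiftL (hocc : ∀ j ∈ T, Occ110At e j) : shiftR T (shiftL T e) = e := by
  funext p
  unfold shiftR
  by_cases hp : InS T (p : ℕ)
  · rw [if_pos hp]
    have hb := InS_bound110 hocc hp
    show shiftL T e ⟨(p : ℕ) - 1, _⟩ = e p
    unfold shiftL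
    by_cases hq : InS T ((p : ℕ) - 1)
    · have hq1 : (p : ℕ) - 1 + 1 < n := by omega
      rw [if_pos hq, dif_pos hq1]
      apply fin_eq_of_extSeq
      show extSeq e ((p : ℕ) - 1 + 1) = extSeq e (p : ℕ)
      have : (p : ℕ) - 1 + 1 = (p : ℕ) := by omega
      rw [this]
    · rw [if_neg hq]
      rcases hp with ⟨j, hj, hpj⟩ | ⟨hpT, j, hj, hpj⟩
      · obtain ⟨h2, heq, hlt⟩ := hocc j hj
        apply fin_eq_of_extSeq
        show extSeq e ((p : ℕ) - 1) = extSeq e (p : ℕ)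
        have e1 : extSeq e ((p : ℕ) - 1) = extSeq e j := by
          have : (p : ℕ) - 1 = j := by omega
          rw [this]
        have e2 : extSeq e (p : ℕ) = extSeq e (j + 1) := by rw [hpj]
        omega
      · exact absurd (Or.inl ⟨j, hj, by omega⟩) hq
  · rw [if_neg hp]
    unfold shiftL
    rw [if_neg hp]

end Side110

section Side100

variable {T : Finset ℕ} {f : Fin n → Fin n}

lemma adj100 (hocc : ∀ j ∈ T, Occ100At f j) {j : ℕ} (hj : j ∈ T) : j + 1 ∉ T := by
  intro hj1
  obtain ⟨h2, hlt, heq⟩ := hocc j hj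
  obtain ⟨h2', hlt', heq'⟩ := hocc (j + 1) hj1
  have h3 : extSeq f (j + 1 + 1) = extSeq f (j + 2) := by norm_num
  omega

lemma InS_bound100 (hocc : ∀ j ∈ T, Occ100At f j) {p : ℕ} (hp : InS T p) :
    1 ≤ p ∧ p + 1 < n := by
  rcases hp with ⟨j, hj, hpj⟩ | ⟨hpT, j, hj, hpj⟩
  · have := (hocc j hj).1
    omega
  · have := (hocc p hpT).1
    omega

lemma extSeq_shiftR (hocc : ∀ j ∈ T, Occ100At f j) (p : ℕ) :
    extSeq (shiftR T f) p = if InS T p then extSeq f (p - 1) else extSeq f p := by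
  by_cases hp : InS T p
  · have hb := InS_bound100 hocc hp
    have hpn : p < n := by omega
    have hpn1 : p - 1 < n := by omega
    rw [if_pos hp, extSeq_eq _ hpn, extSeq_eq f hpn1]
    show (shiftR T f ⟨p, hpn⟩ : ℕ) = _
    unfold shiftR
    simp only [if_pos hp]
  · rw [if_neg hp]
    by_cases hpn : p < n
    · rw [extSeq_eq _ hpn, extSeq_eq f hpn]
      show (shiftR T f ⟨p, hpn⟩ : ℕ) = _
      unfold shiftR
      simp only [if_neg hp]
    · unfold extSeq
      rw [dif_neg hpn, dif_neg hpn]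

lemma occ110_shiftR (hocc : ∀ j ∈ T, Occ100At f j) {i : ℕ} (hi : i ∈ T) :
    Occ110At (shiftR T f) i := by
  obtain ⟨h2, hlt, heq⟩ := hocc i hi
  have key := extSeq_shiftR hocc
  have Gi : extSeq (shiftR T f) i = extSeq f i := by
    rw [key i]
    by_cases h : InS T i
    · rw [if_pos h]
      rcases h with ⟨j, hj, hij⟩ | ⟨hiT, j, hj, hij⟩
      · have : j + 1 ∈ T := hij ▸ hi
        exact absurd this (adj100 hocc hj)
      · obtain ⟨h2', hlt', heq'⟩ := hocc j hj
        have e1 : extSeq f (i - 1) = extSeq f (j + 1) := by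
          have : i - 1 = j + 1 := by omega
          rw [this]
        have e2 : extSeq f i = extSeq f (j + 2) := by rw [hij]
        omega
    · rw [if_neg h]
  have Gi1 : extSeq (shiftR T f) (i + 1) = extSeq f i := by
    rw [key (i + 1), if_pos (show InS T (i+1) from Or.inl ⟨i, hi, rfl⟩)]
    norm_num
  have Gi2 : extSeq (shiftR T f) (i + 2) = extSeq f (i + 1) := by
    rw [key (i + 2)]
    by_cases h : InS T (i + 2)
    · rw [if_pos h]
      rcases h with ⟨j, hj, hij⟩ | ⟨hiT, j, hj, hij⟩
      · have hji : j = i + 1 := by omega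
        rw [hji] at hj
        exact absurd hj (adj100 hocc hi)
      · norm_num
    · rw [if_neg h]
      exact heq.symm
  refine ⟨h2, ?_, ?_⟩
  · rw [Gi, Gi1]
  · rw [Gi1, Gi2]
    exact hlt

lemma invseq_shiftR (hf : IsInvSeq f) : IsInvSeq (shiftR T f) := by
  intro p
  unfold shiftR
  by_cases hp : InS T (p : ℕ)
  · rw [if_pos hp]
    calc ((f ⟨(p : ℕ) - 1, _⟩ : Fin n) : ℕ) ≤ (p : ℕ) - 1 := hf _
      _ ≤ (p : ℕ) := Nat.sub_le _ _
  · rw [if_neg hp]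
    exact hf p

lemma shiftL_shiftR (hocc : ∀ j ∈ T, Occ100At f j) : shiftL T (shiftR T f) = f := by
  funext p
  unfold shiftL
  by_cases hp : InS T (p : ℕ)
  · have hb := InS_bound100 hocc hp
    rw [if_pos hp, dif_pos hb.2]
    show shiftR T f ⟨(p : ℕ) + 1, _⟩ = f p
    unfold shiftR
    by_cases hq : InS T ((p : ℕ) + 1)
    · rw [if_pos hq]
      apply fin_eq_of_extSeq
      show extSeq f ((p : ℕ) + 1 - 1) = extSeq f (p : ℕ)
      norm_num
    · rw [if_neg hq]
      rcases hp with ⟨j, hj, hpj⟩ | ⟨hpT, j, hj, hpj⟩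
      · obtain ⟨h2, hlt, heq⟩ := hocc j hj
        apply fin_eq_of_extSeq
        show extSeq f ((p : ℕ) + 1) = extSeq f (p : ℕ)
        have e1 : extSeq f ((p : ℕ) + 1) = extSeq f (j + 2) := by
          have : (p : ℕ) + 1 = j + 2 := by omega
          rw [this]
        have e2 : extSeq f (p : ℕ) = extSeq f (j + 1) := by rw [hpj]
        omega
      · exact absurd (Or.inl ⟨(p : ℕ), hpT, rfl⟩) hq
  · rw [if_neg hp]
    unfold shiftR
    rw [if_neg hp]

end Side100

/-! ### Counting -/

noncomputable def cntEq (n : ℕ) (P : (Fin n → Fin n) → ℕ → Prop) (T : Finset ℕ) : ℕ :=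
  (Finset.univ.filter fun e : Fin n → Fin n => IsInvSeq e ∧ ∀ i : ℕ, P e i ↔ i ∈ T).card

noncomputable def cntGe (n : ℕ) (P : (Fin n → Fin n) → ℕ → Prop) (T : Finset ℕ) : ℕ :=
  (Finset.univ.filter fun e : Fin n → Fin n => IsInvSeq e ∧ ∀ i ∈ T, P e i).card

lemma cntGe_110_eq_100 (T : Finset ℕ) : cntGe n Occ110At T = cntGe n Occ100At T := by
  unfold cntGe
  apply Finset.card_nbij' (i := shiftL T) (j := shiftR T)
  · intro e he
    simp only [Finset.mem_coe, mem_filter, mem_univ, true_and] at he ⊢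
    exact ⟨invseq_shiftL he.2 he.1, fun i hi => occ100_shiftL he.2 hi⟩
  · intro f hf
    simp only [Finset.mem_coe, mem_filter, mem_univ, true_and] at hf ⊢
    exact ⟨invseq_shiftR hf.1, fun i hi => occ110_shiftR hf.2 hi⟩
  · intro e he
    simp only [Finset.mem_coe, mem_filter, mem_univ, true_and] at he
    exact shiftR_shiftL he.2
  · intro f hf
    simp only [Finset.mem_coe, mem_filter, mem_univ, true_and] at hf
    exact shiftL_shiftR hf.2

lemma cntGe_eq_sum (P : (Fin n → Fin n) → ℕ → Prop) (hP : ∀ e i, P e i → i + 2 < n)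
    {T : Finset ℕ} (hT : T ⊆ Finset.range n) :
    cntGe n P T = ∑ S ∈ (Finset.range n).powerset.filter (fun S => T ⊆ S), cntEq n P S := by
  unfold cntGe
  rw [Finset.card_eq_sum_card_fiberwise
    (f := fun e : Fin n → Fin n => (Finset.range n).filter (P e))
    (t := (Finset.range n).powerset.filter (fun S => T ⊆ S)) ?_]
  · apply Finset.sum_congr rfl
    intro S hS
    rw [mem_filter, mem_powerset] at hS
    obtain ⟨hSsub, hTS⟩ := hS
    unfold cntEq
    congr 1
    rw [Finset.filter_filter]
    apply Finset.filter_congr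
    intro e _
    constructor
    · rintro ⟨⟨hinv, -⟩, hset⟩
      refine ⟨hinv, fun i => ?_⟩
      constructor
      · intro hPei
        have hin : i ∈ (Finset.range n).filter (P e) :=
          mem_filter.mpr ⟨mem_range.mpr (by have := hP e i hPei; omega), hPei⟩
        rwa [hset] at hin
      · intro hiS
        rw [← hset] at hiS
        exact (mem_filter.mp hiS).2
    · rintro ⟨hinv, hiff⟩
      refine ⟨⟨hinv, fun i hi => (hiff i).mpr (hTS hi)⟩, ?_⟩
      ext i
      rw [mem_filter, mem_range]
      constructor
      · rintro ⟨-, hPei⟩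
        exact (hiff i).mp hPei
      · intro hiS
        exact ⟨mem_range.mp (hSsub hiS), (hiff i).mpr hiS⟩
  · intro e he
    rw [Finset.mem_coe, mem_filter] at he
    rw [Finset.mem_coe, mem_filter, mem_powerset]
    refine ⟨Finset.filter_subset _ _, fun i hi => ?_⟩
    exact mem_filter.mpr ⟨hT hi, he.2.2 i hi⟩

lemma key (P Q : (Fin n → Fin n) → ℕ → Prop)
    (hP : ∀ e i, P e i → i + 2 < n) (hQ : ∀ e i, Q e i → i + 2 < n)
    (hB : ∀ T : Finset ℕ, cntGe n P T = cntGe n Q T) :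
    ∀ k (T : Finset ℕ), T ⊆ Finset.range n → (Finset.range n).card - T.card ≤ k →
      cntEq n P T = cntEq n Q T := by
  intro k
  induction k with
  | zero =>
    intro T hTsub hcard
    have hcard' : (Finset.range n).card ≤ T.card := by omega
    have hTeq : T = Finset.range n := Finset.eq_of_subset_of_card_le hTsub hcard'
    subst hTeq
    have hsingle : (Finset.range n).powerset.filter (fun S => Finset.range n ⊆ S)
        = {Finset.range n} := by
      ext S
      simp only [mem_filter, mem_powerset, Finset.mem_singleton]
      constructor
      · rintro ⟨h1, h2⟩
        exact Finset.Subset.antisymm h1 h2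
      · rintro rfl
        exact ⟨Finset.Subset.refl _, Finset.Subset.refl _⟩
    have h1 := cntGe_eq_sum P hP (Finset.Subset.refl (Finset.range n))
    have h2 := cntGe_eq_sum Q hQ (Finset.Subset.refl (Finset.range n))
    rw [hsingle, Finset.sum_singleton] at h1 h2
    rw [← h1, ← h2]
    exact hB _
  | succ k ih =>
    intro T hTsub hcard
    set t := (Finset.range n).powerset.filter (fun S => T ⊆ S) with ht
    have hTt : T ∈ t := mem_filter.mpr ⟨mem_powerset.mpr hTsub, Finset.Subset.refl _⟩
    have hsum : ∑ S ∈ t.erase T, cntEq n P S = ∑ S ∈ t.erase T, cntEq n Q S := by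
      apply Finset.sum_congr rfl
      intro S hS
      obtain ⟨hne, hSt⟩ := Finset.mem_erase.mp hS
      rw [ht, mem_filter, mem_powerset] at hSt
      obtain ⟨hSsub, hTS⟩ := hSt
      have hss : T ⊂ S := Finset.ssubset_iff_subset_ne.mpr ⟨hTS, fun h => hne h.symm⟩
      have hc1 : T.card < S.card := Finset.card_lt_card hss
      have hc2 : S.card ≤ (Finset.range n).card := Finset.card_le_card hSsub
      exact ih S hSsub (by omega)
    have e1 : cntEq n P T + ∑ S ∈ t.erase T, cntEq n P S = cntGe n P T := by
      rw [cntGe_eq_sum P hP hTsub, ← ht]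
      exact Finset.add_sum_erase t _ hTt
    have e2 : cntEq n Q T + ∑ S ∈ t.erase T, cntEq n Q S = cntGe n Q T := by
      rw [cntGe_eq_sum Q hQ hTsub, ← ht]
      exact Finset.add_sum_erase t _ hTt
    have e3 := hB T
    omega

lemma card_nat (P : (Fin n → Fin n) → Prop) [DecidablePred P] :
    Nat.card {e : Fin n → Fin n // P e} = (Finset.univ.filter P).card := by
  rw [Nat.card_eq_fintype_card, Fintype.card_subtype]

end WilfAux

/-- 110 and 100 are super-strongly Wilf equivalent: the set of occurrence positions is
equidistributed. -/
theorem stmt7 (n : ℕ) (T : Finset ℕ) (hT : ∀ i ∈ T, i < n) :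
    Nat.card {e : Fin n → Fin n // IsInvSeq e ∧ ∀ i : ℕ, Occ110At e i ↔ i ∈ T} =
    Nat.card {e : Fin n → Fin n // IsInvSeq e ∧ ∀ i : ℕ, Occ100At e i ↔ i ∈ T} := by
  have hsub : T ⊆ Finset.range n := fun i hi => Finset.mem_range.mpr (hT i hi)
  have h1 : Nat.card {e : Fin n → Fin n // IsInvSeq e ∧ ∀ i : ℕ, Occ110At e i ↔ i ∈ T}
      = WilfAux.cntEq n Occ110At T := by
    classical
    rw [Nat.card_eq_fintype_card, Fintype.card_subtype]
    unfold WilfAux.cntEq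
    congr
  have h2 : Nat.card {e : Fin n → Fin n // IsInvSeq e ∧ ∀ i : ℕ, Occ100At e i ↔ i ∈ T}
      = WilfAux.cntEq n Occ100At T := by
    classical
    rw [Nat.card_eq_fintype_card, Fintype.card_subtype]
    unfold WilfAux.cntEq
    congr
  rw [h1, h2]
  exact WilfAux.key Occ110At Occ100At (fun e i h => h.1) (fun e i h => h.1)
    WilfAux.cntGe_110_eq_100 ((Finset.range n).card - T.card) T hsub le_rfl
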